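/- Let t ∈ ℂ with 0 < |Re(t)| < 1/2, t ≠ 0. The power series G(ξ,t) = -(1/4π²)·∑_{g=2}^∞ (B_{2g}/(2g·(2g-2)!·(2g-3)!))·ξ^{2g-3}·∂_t^{2g} Li₃(e^{2πit}) has radius of convergence at least 2π|t| in ξ. -/

import Mathlib

open Complex

noncomputable def negLi : ℕ → ℂ → ℂ
  | 0 => fun z => z / (1 - z)
  | n + 1 => fun z => z * deriv (negLi n) z

lemma negLi_analytic (n : ℕ) : AnalyticOnNhd ℂ (negLi n) {z : ℂ | z ≠ 1} := by
  induction n with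
  | zero =>
    exact analyticOnNhd_id.div ((analyticOnNhd_const).sub analyticOnNhd_id)
      (fun z hz => sub_ne_zero.2 (Ne.symm hz))
  | succ n ih =>
    show AnalyticOnNhd ℂ (fun z => z * deriv (negLi n) z) _
    exact analyticOnNhd_id.mul ih.deriv

lemma negLi_iteratedDeriv (n : ℕ) : ∀ w : ℂ, exp w ≠ 1 →
    iteratedDeriv n (fun w => exp w / (1 - exp w)) w = negLi n (exp w) := by
  induction n with
  | zero => intro w _; simp [negLi]
  | succ n ih =>
    intro w hw
    have hV : IsOpen {w : ℂ | exp w ≠ 1} :=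
      isOpen_ne.preimage continuous_exp
    rw [iteratedDeriv_succ]
    have hev : iteratedDeriv n (fun w => exp w / (1 - exp w)) =ᶠ[nhds w]
        fun w => negLi n (exp w) :=
      Filter.eventuallyEq_of_mem (hV.mem_nhds hw) (fun x hx => ih x hx)
    rw [hev.deriv_eq]
    have hd : HasDerivAt (negLi n) (deriv (negLi n) (exp w)) (exp w) :=
      ((negLi_analytic n) (exp w) hw).differentiableAt.hasDerivAt
    have := (hd.comp w (Complex.hasDerivAt_exp w)).deriv
    rw [show ((negLi n) ∘ exp) = fun w => negLi n (exp w) from rfl] at this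
    rw [this]
    show _ = exp w * deriv (negLi n) (exp w)
    ring

lemma dist_int (t : ℂ) (ht : |t.re| ≤ 1/2) (k : ℤ) :
    ‖t‖ ≤ ‖t - (k : ℂ)‖ := by
  have hk : (|k| : ℝ) ≤ (k : ℝ)^2 := by
    have : |k| ≤ k^2 := by
      rcases eq_or_ne k 0 with h | h
      · simp [h]
      · calc |k| = |k| * 1 := (mul_one _).symm
          _ ≤ |k| * |k| := by
            have := Int.one_le_abs h
            exact mul_le_mul_of_nonneg_left this (abs_nonneg k)
          _ = k^2 := by rw [← _root_.sq_abs]; ring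
    exact_mod_cast this
  have e1 : (‖t - (k:ℂ)‖)^2 = (t.re - k)^2 + t.im^2 := by
    rw [Complex.sq_norm, Complex.normSq_apply]
    simp [Complex.sub_re, Complex.sub_im]
    ring
  have e2 : (‖t‖)^2 = t.re^2 + t.im^2 := by
    rw [Complex.sq_norm, Complex.normSq_apply]; ring
  have h1 : (‖t‖)^2 ≤ (‖t - (k:ℂ)‖)^2 := by
    rw [e1, e2]
    have habs : |2 * (k:ℝ) * t.re| ≤ (|k|:ℝ) := by
      rw [abs_mul, abs_mul]
      calc |(2:ℝ)| * |(k:ℝ)| * |t.re| ≤ 2 * |(k:ℝ)| * (1/2) := by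
            rw [_root_.abs_two]
            exact mul_le_mul_of_nonneg_left ht (by positivity)
        _ = |(k:ℝ)| := by ring
      -- note |(k:ℤ)| cast
    have := abs_le.mp habs
    push_cast at hk ⊢
    nlinarith [this.1, this.2]
  nlinarith [norm_nonneg t, norm_nonneg (t - (k:ℂ)), h1]

lemma bern_bound (m : ℕ) (hm : m ≠ 0) :
    |(bernoulli (2*m) : ℝ)| ≤ 4 * (Nat.factorial (2*m) : ℝ) / (2*Real.pi)^(2*m) := by
  have hs := hasSum_zeta_nat hm
  set S : ℝ := ∑' n : ℕ, 1 / (n : ℝ) ^ (2*m) with hS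
  have hSeq : S = (-1:ℝ)^(m+1) * 2^(2*m-1) * Real.pi^(2*m) * (bernoulli (2*m) : ℝ) / (Nat.factorial (2*m) : ℝ) :=
    hs.tsum_eq
  have hS2 : S ≤ 2 := by
    have hle : S ≤ Real.pi^2/6 := by
      rw [← hasSum_zeta_two.tsum_eq]
      refine Summable.tsum_le_tsum (fun n => ?_) hs.summable hasSum_zeta_two.summable
      rcases Nat.eq_zero_or_pos n with h | h
      · subst h; simp [zero_pow, Nat.mul_ne_zero two_ne_zero hm]
      · apply one_div_le_one_div_of_le
        · positivity
        · exact_mod_cast Nat.pow_le_pow_right h (by omega)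
    nlinarith [Real.pi_lt_d2, Real.pi_pos, sq_nonneg (Real.pi - 3.15)]
  have hS0 : 0 ≤ S := tsum_nonneg (fun n => by positivity)
  have hfac : (0:ℝ) < (Nat.factorial (2*m) : ℝ) := by exact_mod_cast Nat.factorial_pos _
  have hpi : (0:ℝ) < Real.pi := Real.pi_pos
  have habs : |S| = 2^(2*m-1) * Real.pi^(2*m) * |(bernoulli (2*m) : ℝ)| / (Nat.factorial (2*m) : ℝ) := by
    rw [hSeq, abs_div, abs_mul, abs_mul, abs_mul, _root_.abs_pow, _root_.abs_pow, _root_.abs_pow,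
      abs_neg, abs_one, one_pow, one_mul, _root_.abs_two, _root_.abs_of_pos hpi,
      _root_.abs_of_pos hfac]
  rw [_root_.abs_of_nonneg hS0] at habs
  have h2m : (2:ℝ)^(2*m) = 2^(2*m-1)*2 := by
    rw [← pow_succ]; congr 1; omega
  have hpow : (2*Real.pi)^(2*m) = 2 * 2^(2*m-1) * Real.pi^(2*m) := by
    rw [mul_pow, h2m]; ring
  rw [le_div_iff₀ (by positivity), hpow]
  have := habs ▸ hS2
  rw [div_le_iff₀ hfac] at this
  nlinarith [abs_nonneg ((bernoulli (2*m) : ℝ)), pow_pos hpi (2*m), pow_pos (by norm_num : (0:ℝ)<2) (2*m-1)]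

theorem borel_transform_radius (t : ℂ) (ht0 : t ≠ 0)
    (htre : 0 < |t.re|) (htre' : |t.re| < 1 / 2) :
    ∀ ξ : ℂ, ‖ξ‖ < 2 * Real.pi * ‖t‖ →
      Summable (fun g : ℕ =>
        -(1 / (4 * (Real.pi : ℂ) ^ 2)) *
          ((bernoulli (2 * (g + 2)) : ℂ)
            / ((2 * (g + 2) : ℕ) * ((2 * (g + 2) - 2).factorial : ℂ)
                * ((2 * (g + 2) - 3).factorial : ℂ)))
          * ξ ^ (2 * (g + 2) - 3)
          * (2 * Real.pi * I) ^ (2 * (g + 2))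
          * negLi (2 * (g + 2) - 3) (exp (2 * Real.pi * I * t))) := by
  have hpi := Real.pi_pos
  set μ : ℂ := 2 * Real.pi * I * t with hμ
  set R : ℝ := 2 * Real.pi * ‖t‖ with hRdef
  have hR : 0 < R := by
    have := norm_pos_iff.mpr ht0
    positivity
  have h2πI : (2 * (Real.pi : ℂ) * I) ≠ 0 := by
    refine mul_ne_zero (mul_ne_zero two_ne_zero ?_) I_ne_zero
    exact_mod_cast Real.pi_ne_zero
  have habs2πI : ‖(2 * (Real.pi : ℂ) * I)‖ = 2 * Real.pi := by
    simp [norm_mul, Complex.norm_I, Complex.norm_real, Real.norm_eq_abs, _root_.abs_of_pos hpi]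
  -- points in the ball avoid the singularities of f
  have hball : ∀ w ∈ Metric.ball μ R, exp w ≠ 1 := by
    intro w hw h1
    obtain ⟨n, hn⟩ := Complex.exp_eq_one_iff.mp h1
    rw [Metric.mem_ball, Complex.dist_eq] at hw
    have hwμ : w - μ = (2 * (Real.pi : ℂ) * I) * ((n : ℂ) - t) := by
      rw [hn, hμ]; ring
    rw [hwμ, norm_mul, habs2πI] at hw
    have h1 : ‖t‖ ≤ ‖(n:ℂ) - t‖ := by
      rw [norm_sub_rev]
      exact dist_int t htre'.le n
    rw [hRdef] at hw
    nlinarith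
  have hz₀ : exp μ ≠ 1 := by
    intro h1
    obtain ⟨n, hn⟩ := Complex.exp_eq_one_iff.mp h1
    have hteq : t = (n : ℂ) := by
      apply mul_left_cancel₀ h2πI
      rw [show 2 * (Real.pi:ℂ) * I * t = μ from rfl, hn]; ring
    have : t.re = (n : ℝ) := by rw [hteq]; simp
    rw [this] at htre htre'
    rcases eq_or_ne n 0 with h | h
    · rw [h] at htre; simp at htre
    · have : (1 : ℝ) ≤ |(n : ℝ)| := by exact_mod_cast Int.one_le_abs h
      linarith
  have hdiff : DifferentiableOn ℂ (fun w => exp w / (1 - exp w)) (Metric.ball μ R) := by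
    intro w hw
    exact (differentiable_exp.differentiableAt.div
      ((differentiableAt_const _).sub differentiable_exp.differentiableAt)
      (sub_ne_zero.2 (Ne.symm (hball w hw)))).differentiableWithinAt
  intro ξ hξ
  set r : ℝ := (‖ξ‖ + R) / 2 with hrdef
  have hr0 : 0 < r := by positivity
  have hξr : ‖ξ‖ < r := by rw [hrdef]; linarith
  have hrR : r < R := by rw [hrdef]; linarith
  have hz : μ + (r : ℂ) ∈ Metric.ball μ R := by
    rw [Metric.mem_ball, Complex.dist_eq]
    simpa [_root_.abs_of_pos hr0] using hrR
  have H := (Complex.hasSum_taylorSeries_on_ball hdiff hz).summable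
  have hten : Filter.Tendsto
      (fun n : ℕ => ‖((n.factorial : ℂ))⁻¹ • ((μ + (r:ℂ)) - μ) ^ n •
        iteratedDeriv n (fun w => exp w / (1 - exp w)) μ‖) Filter.atTop (nhds 0) := by
    simpa using H.tendsto_atTop_zero.norm
  obtain ⟨C, hC⟩ := hten.bddAbove_range
  have hC' : ∀ n : ℕ, ‖negLi n (exp μ)‖ ≤ C * n.factorial / r ^ n := by
    intro n
    have h1 : ‖((n.factorial : ℂ))⁻¹ • ((μ + (r:ℂ)) - μ) ^ n •
        iteratedDeriv n (fun w => exp w / (1 - exp w)) μ‖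
        = (n.factorial : ℝ)⁻¹ * r ^ n * ‖negLi n (exp μ)‖ := by
      rw [negLi_iteratedDeriv n μ hz₀, norm_smul, norm_smul, norm_inv]
      simp [_root_.abs_of_pos hr0, mul_assoc]
    have h2 : (n.factorial : ℝ)⁻¹ * r ^ n * ‖negLi n (exp μ)‖ ≤ C :=
      h1 ▸ hC (Set.mem_range_self n)
    have hfac : (0:ℝ) < (n.factorial : ℝ) := by exact_mod_cast n.factorial_pos
    calc ‖negLi n (exp μ)‖
        = ((n.factorial : ℝ)⁻¹ * r ^ n * ‖negLi n (exp μ)‖) * (n.factorial * (r ^ n)⁻¹) := by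
          field_simp
      _ ≤ C * (n.factorial * (r ^ n)⁻¹) := by
          apply mul_le_mul_of_nonneg_right h2
          positivity
      _ = C * n.factorial / r ^ n := by ring
  have hC0 : 0 ≤ C := le_trans (norm_nonneg _) (hC (Set.mem_range_self 0))
  set q : ℝ := ‖ξ‖ / r with hqdef
  have hq0 : 0 ≤ q := by positivity
  have hq1 : q < 1 := (div_lt_one hr0).mpr hξr
  clear_value μ R r q
  have hsum : Summable (fun g : ℕ => (C / Real.pi ^ 2) * ((2 * (g:ℝ) + 3) * q ^ (2*g+1))) := by
    apply Summable.mul_left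
    have hq2 : q ^ 2 < 1 := by nlinarith
    have h1 : Summable (fun g : ℕ => (g:ℝ) * (q^2)^g) := by
      simpa using summable_pow_mul_geometric_of_norm_lt_one 1
        (by rwa [Real.norm_eq_abs, _root_.abs_of_nonneg (by positivity : (0:ℝ) ≤ q^2)])
    have h2 : Summable (fun g : ℕ => (q^2)^g) :=
      summable_geometric_of_lt_one (by positivity) hq2
    refine ((h1.mul_left (2*q)).add (h2.mul_left (3*q))).congr fun g => ?_
    have hpow : q ^ (2*g+1) = (q^2)^g * q := by rw [pow_succ, pow_mul]
    rw [hpow]; ring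
  apply Summable.of_norm_bounded hsum
  intro g
  simp only [show (2*(g+2)-3 : ℕ) = 2*g+1 from by omega,
    show (2*(g+2)-2 : ℕ) = 2*g+2 from by omega]
  rw [show (2 * Real.pi * I : ℂ) = ((2*Real.pi : ℝ) : ℂ) * I by push_cast; ring]
  simp only [norm_neg, norm_mul, norm_div, norm_pow, norm_one, norm_inv,
    Complex.norm_natCast, Complex.norm_ofNat, Complex.norm_I, Complex.norm_real,
    Real.norm_eq_abs, mul_one]
  have hbnorm : ‖((bernoulli (2*(g+2)) : ℚ) : ℂ)‖ = |(bernoulli (2*(g+2)) : ℝ)| := by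
    rw [show ((bernoulli (2*(g+2)) : ℚ) : ℂ) = (((bernoulli (2*(g+2)) : ℝ)) : ℂ) by push_cast; ring,
      Complex.norm_real, Real.norm_eq_abs]
  rw [hbnorm, _root_.abs_of_pos hpi, _root_.abs_two]
  have hfact : (((2*(g+2)).factorial : ℕ) : ℝ)
      = ((2*(g+2) : ℕ) : ℝ) * ((2*(g:ℝ)+3) * (((2*g+2).factorial : ℕ) : ℝ)) := by
    rw [show (2*(g+2) : ℕ) = (2*g+3)+1 by omega, Nat.factorial_succ,
      show (2*g+3 : ℕ) = (2*g+2)+1 by omega, Nat.factorial_succ]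
    push_cast; ring
  have hfacpos : (0:ℝ) < (((2*g+1).factorial : ℕ) : ℝ) := by exact_mod_cast Nat.factorial_pos _
  have hfacpos2 : (0:ℝ) < (((2*g+2).factorial : ℕ) : ℝ) := by exact_mod_cast Nat.factorial_pos _
  have hmpos : (0:ℝ) < ((2*(g+2) : ℕ) : ℝ) := by positivity
  calc 1 / (4 * Real.pi ^ 2) *
            (|(bernoulli (2*(g+2)) : ℝ)| / (((2*(g+2) : ℕ) : ℝ) * (((2*g+2).factorial : ℕ) : ℝ)
              * (((2*g+1).factorial : ℕ) : ℝ))) *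
          ‖ξ‖ ^ (2*g+1) * (2 * Real.pi) ^ (2*(g+2)) * ‖negLi (2*g+1) (cexp μ)‖
      ≤ 1 / (4 * Real.pi ^ 2) *
            ((4 * (((2*(g+2)).factorial : ℕ) : ℝ) / (2*Real.pi)^(2*(g+2)))
              / (((2*(g+2) : ℕ) : ℝ) * (((2*g+2).factorial : ℕ) : ℝ)
              * (((2*g+1).factorial : ℕ) : ℝ))) *
          ‖ξ‖ ^ (2*g+1) * (2 * Real.pi) ^ (2*(g+2))
          * (C * (((2*g+1).factorial : ℕ) : ℝ) / r ^ (2*g+1)) := by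
        gcongr
        · exact bern_bound (g+2) (by omega)
        · exact hC' (2*g+1)
    _ = C / Real.pi ^ 2 * ((2 * (g:ℝ) + 3) * q ^ (2*g+1)) := by
        have hξq : ‖ξ‖ ^ (2*g+1) = q^(2*g+1) * r^(2*g+1) := by
          rw [hqdef, div_pow]
          field_simp
        rw [hfact, hξq]
        have hπ : Real.pi ≠ 0 := ne_of_gt hpi
        have hr' : r ≠ 0 := ne_of_gt hr0
        field_simp
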